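/- The following are equivalent: (1) p_n · p_{n+1} ≥ 0 for all n ∈ ℕ; (2) γ ∈ {cos(π/m) : m ∈ ℕ, m ≥ 2} ∪ [1, ∞). -/

import Mathlib

open Real

private lemma cos_nat_pi (q : ℕ) : Real.cos (q * π) = (-1) ^ q := by
  have := Real.cos_nat_mul_pi_sub 0 q
  simpa using this

private lemma sin_nat_pi_add (q : ℕ) (x : ℝ) :
    Real.sin (q * π + x) = (-1) ^ q * Real.sin x := by
  rw [Real.sin_add, Real.sin_nat_mul_pi, cos_nat_pi]
  ring

private lemma sin_neg_of_pi_lt {x : ℝ} (h1 : π < x) (h2 : x < 2 * π) :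
    Real.sin x < 0 := by
  have : Real.sin (x - π) > 0 := Real.sin_pos_of_pos_of_lt_pi (by linarith) (by linarith)
  have hs : Real.sin (x - π) = -Real.sin x := by
    rw [Real.sin_sub, Real.sin_pi, Real.cos_pi]; ring
  linarith [hs ▸ this]

/-- With `γ ∈ ℝ` and the sequence `p` defined by `p₋₁ = -1`, `p₀ = 0`,
`p_{n+1} = 2γ pₙ - p_{n-1}` for `n ∈ ℕ`, the following are equivalent:
(1) `pₙ p_{n+1} ≥ 0` for all `n ∈ ℕ`;
(2) `γ ∈ {cos (π/m) : m ∈ ℕ, m ≥ 2} ∪ [1, ∞)`. -/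
theorem stmt2 (γ : ℝ) (p : ℤ → ℝ)
    (hneg : p (-1) = -1) (h0 : p 0 = 0)
    (hrec : ∀ n : ℕ, p ((n : ℤ) + 1) = 2 * γ * p n - p ((n : ℤ) - 1)) :
    (∀ n : ℕ, 0 ≤ p n * p ((n : ℤ) + 1)) ↔
      ((∃ m : ℕ, 2 ≤ m ∧ γ = Real.cos (Real.pi / m)) ∨ 1 ≤ γ) := by
  -- basic values
  have h1 : p 1 = 1 := by
    have := hrec 0
    norm_num at this
    rw [this, h0, hneg]; ring
  have hrec' : ∀ n : ℕ, p ((n : ℤ) + 2) = 2 * γ * p ((n : ℤ) + 1) - p n := by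
    intro n
    have := hrec (n + 1)
    push_cast at this
    have e1 : ((n : ℤ) + 1 + 1) = (n : ℤ) + 2 := by ring
    have e2 : ((n : ℤ) + 1 - 1) = (n : ℤ) := by ring
    rw [e1, e2] at this
    exact this
  -- formula: if cos θ = γ then p n * sin θ = sin (n θ)
  have formula : ∀ θ : ℝ, Real.cos θ = γ →
      ∀ n : ℕ, p n * Real.sin θ = Real.sin (n * θ) := by
    intro θ hθ n
    have key : ∀ k : ℕ, p k * Real.sin θ = Real.sin (k * θ) ∧
        p ((k : ℤ) + 1) * Real.sin θ = Real.sin ((k + 1 : ℕ) * θ) := by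
      intro k
      induction k with
      | zero =>
        constructor
        · simp [h0]
        · norm_num
          rw [h1]; ring
      | succ k ih =>
        obtain ⟨ih1, ih2⟩ := ih
        have step : p ((k : ℤ) + 2) * Real.sin θ = Real.sin ((k + 2 : ℕ) * θ) := by
          rw [hrec' k]
          have sadd := Real.sin_add ((k + 1 : ℕ) * θ) θ
          have ssub := Real.sin_sub ((k + 1 : ℕ) * θ) θ
          have e1 : ((k + 2 : ℕ) : ℝ) * θ = ((k + 1 : ℕ) : ℝ) * θ + θ := by push_cast; ring
          have e2 : ((k : ℕ) : ℝ) * θ = ((k + 1 : ℕ) : ℝ) * θ - θ := by push_cast; ring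
          rw [e1, sadd, hθ]
          rw [e2, ssub, hθ] at ih1
          linear_combination 2 * γ * ih2 - ih1
        constructor
        · have : ((k : ℤ) + 1) = ((k + 1 : ℕ) : ℤ) := by push_cast; ring
          rw [← this]; exact ih2
        · have : ((k + 1 : ℕ) : ℤ) + 1 = (k : ℤ) + 2 := by push_cast; ring
          rw [this]
          have : ((k + 1 : ℕ) + 1 : ℕ) = (k + 2 : ℕ) := by ring
          rw [this]
          exact step
    exact (key n).1
  constructor
  · -- (1) → (2)
    intro h
    by_cases hγ1 : 1 ≤ γ
    · right; exact hγ1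
    left
    push_neg at hγ1
    -- first, γ ≥ 0 from n = 1
    have h2 : p 2 = 2 * γ := by
      have := hrec 1
      norm_num at this
      rw [this, h0, h1]; ring
    have hγ0 : 0 ≤ γ := by
      have := h 1
      rw [show (((1:ℕ)):ℤ) = 1 by norm_num] at this
      rw [show ((1:ℤ)+1) = 2 by ring] at this
      rw [h1, h2] at this
      linarith
    -- set θ = arccos γ
    set θ := Real.arccos γ with hθdef
    have hcos : Real.cos θ = γ := Real.cos_arccos (by linarith) (by linarith)
    have hθpos : 0 < θ := Real.arccos_pos.mpr hγ1
    have hθlt : θ ≤ π / 2 := by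
      rcases eq_or_lt_of_le hγ0 with h' | h'
      · rw [hθdef, ← h', Real.arccos_zero]
      · exact le_of_lt (Real.arccos_lt_pi_div_two.mpr h')
    have hsin : 0 < Real.sin θ :=
      Real.sin_pos_of_pos_of_lt_pi hθpos (by linarith [Real.pi_pos])
    -- m = floor (π / θ)
    set m := ⌊π / θ⌋₊ with hmdef
    have hπθ2 : 2 ≤ π / θ := by
      rw [le_div_iff₀ hθpos]; linarith
    have hm2 : 2 ≤ m := Nat.le_floor (by exact_mod_cast hπθ2)
    have hmle : (m : ℝ) ≤ π / θ := Nat.floor_le (by positivity)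
    have hmlt : π / θ < m + 1 := Nat.lt_floor_add_one _
    by_cases heq : (m : ℝ) = π / θ
    · refine ⟨m, hm2, ?_⟩
      have hm0 : (m : ℝ) ≠ 0 := by positivity
      have : θ = π / m := by
        field_simp at heq ⊢
        linarith [heq]
      rw [← this, hcos]
    · exfalso
      have hmlt' : (m : ℝ) < π / θ := lt_of_le_of_ne hmle heq
      have hmθ : (m : ℝ) * θ < π := (lt_div_iff₀ hθpos).mp hmlt'
      have hmθ' : π < ((m : ℝ) + 1) * θ := (div_lt_iff₀ hθpos).mp hmlt
      have hs1 : 0 < Real.sin (m * θ) :=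
        Real.sin_pos_of_pos_of_lt_pi (by positivity) hmθ
      have hs2 : Real.sin (((m : ℝ) + 1) * θ) < 0 := by
        apply sin_neg_of_pi_lt hmθ'
        have : ((m : ℝ) + 1) * θ = (m : ℝ) * θ + θ := by ring
        rw [this]
        have : θ < π := by linarith [Real.pi_pos]
        linarith
      have hprod := h m
      have f1 := formula θ hcos m
      have f2 := formula θ hcos (m + 1)
      have e : (((m + 1 : ℕ)) : ℤ) = (m : ℤ) + 1 := by push_cast; ring
      rw [e] at f2
      have e2 : (((m + 1 : ℕ)) : ℝ) * θ = ((m : ℝ) + 1) * θ := by push_cast; ring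
      rw [e2] at f2
      have key2 : p m * Real.sin θ * (p ((m : ℤ) + 1) * Real.sin θ)
          = Real.sin (m * θ) * Real.sin (((m : ℝ) + 1) * θ) := by rw [f1, f2]
      have hneg2 : Real.sin (m * θ) * Real.sin (((m : ℝ) + 1) * θ) < 0 :=
        mul_neg_of_pos_of_neg hs1 hs2
      nlinarith [mul_nonneg hprod (mul_nonneg hsin.le hsin.le), key2, hneg2]
  · -- (2) → (1)
    rintro (⟨m, hm2, hγ⟩ | hγ1)
    · -- γ = cos(π/m)
      set θ := π / m with hθdef
      have hm0 : (0 : ℝ) < m := by exact_mod_cast Nat.lt_of_lt_of_le (by norm_num) hm2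
      have hθpos : 0 < θ := by positivity
      have hθle : θ ≤ π / 2 := by
        rw [hθdef, div_le_div_iff₀ hm0 (by norm_num)]
        have : (2 : ℝ) ≤ m := by exact_mod_cast hm2
        nlinarith [Real.pi_pos]
      have hsin : 0 < Real.sin θ :=
        Real.sin_pos_of_pos_of_lt_pi hθpos (by linarith [Real.pi_pos])
      have hcos : Real.cos θ = γ := hγ.symm
      intro n
      have f1 := formula θ hcos n
      have f2 := formula θ hcos (n + 1)
      have e : (((n + 1 : ℕ)) : ℤ) = (n : ℤ) + 1 := by push_cast; ring
      rw [e] at f2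
      -- sin(nθ) sin((n+1)θ) ≥ 0
      obtain ⟨q, r, hrm, hn⟩ : ∃ q r : ℕ, r < m ∧ n = q * m + r :=
        ⟨n / m, n % m, Nat.mod_lt n (by omega),
          by rw [mul_comm]; exact (Nat.div_add_mod n m).symm⟩
      have key : 0 ≤ Real.sin (n * θ) * Real.sin ((n + 1 : ℕ) * θ) := by
        have e1 : (n : ℝ) * θ = q * π + r * θ := by
          rw [hn]
          push_cast
          rw [hθdef]
          field_simp
        have e2 : ((n + 1 : ℕ) : ℝ) * θ = q * π + (r + 1) * θ := by
          rw [hn]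
          push_cast
          rw [hθdef]
          field_simp
          ring
        rw [e1, e2, sin_nat_pi_add, sin_nat_pi_add]
        have hrm1 : (r : ℝ) + 1 ≤ m := by exact_mod_cast hrm
        have ht : θ * m = π := by rw [hθdef]; field_simp
        have hs1 : 0 ≤ Real.sin (r * θ) := by
          apply Real.sin_nonneg_of_nonneg_of_le_pi (by positivity)
          nlinarith [mul_nonneg hθpos.le (sub_nonneg.mpr hrm1), ht, hθpos]
        have hs2 : 0 ≤ Real.sin (((r : ℝ) + 1) * θ) := by
          apply Real.sin_nonneg_of_nonneg_of_le_pi (by positivity)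
          nlinarith [mul_nonneg hθpos.le (sub_nonneg.mpr hrm1), ht]
        have hq1 : ((-1 : ℝ)) ^ q * ((-1 : ℝ)) ^ q = 1 := by
          rw [← pow_add]
          exact Even.neg_one_pow ⟨q, rfl⟩
        calc (0:ℝ) ≤ Real.sin (r * θ) * Real.sin (((r : ℝ) + 1) * θ) := mul_nonneg hs1 hs2
          _ = ((-1:ℝ)) ^ q * ((-1:ℝ)) ^ q * (Real.sin (r * θ) * Real.sin (((r : ℝ) + 1) * θ)) := by
              rw [hq1, one_mul]
          _ = (-1) ^ q * Real.sin (↑r * θ) * ((-1) ^ q * Real.sin ((↑r + 1) * θ)) := by ring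
      have key2 : p n * Real.sin θ * (p ((n : ℤ) + 1) * Real.sin θ)
          = Real.sin (n * θ) * Real.sin (((n + 1 : ℕ) : ℝ) * θ) := by rw [f1, f2]
      nlinarith [key, key2, mul_pos hsin hsin]
    · -- γ ≥ 1: sequence nonneg and increasing
      have key : ∀ n : ℕ, 0 ≤ p n ∧ p n ≤ p ((n : ℤ) + 1) := by
        intro n
        induction n with
        | zero =>
          norm_num [h0]
          rw [h1]; norm_num
        | succ n ih =>
          obtain ⟨ih1, ih2⟩ := ih
          have hpn1 : 0 ≤ p ((n : ℤ) + 1) := le_trans ih1 ih2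
          have step := hrec' n
          constructor
          · have e : (((n + 1 : ℕ)) : ℤ) = (n : ℤ) + 1 := by push_cast; ring
            rw [e]; exact hpn1
          · have e : (((n + 1 : ℕ)) : ℤ) = (n : ℤ) + 1 := by push_cast; ring
            rw [e, show ((n:ℤ)+1+1) = (n:ℤ)+2 by ring, step]
            nlinarith [hpn1, ih1, ih2]
      intro n
      obtain ⟨k1, k2⟩ := key n
      exact mul_nonneg k1 (le_trans k1 k2)
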